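/- The total number of cyclic subgroups of C_{2^a} × C_{2^b} × C_{2^c} with a ≥ b ≥ c ≥ 1 is (7/3)(4^c − 1) + 3·2^c(2^b − 2^c) + (a − b)·2^(b+c) + 1. -/

import Mathlib

open Finset AddSubgroup

set_option linter.unusedSectionVars false

private lemma sum_two_pow (n : ℕ) : ∑ i ∈ Finset.range n, 2 ^ i = 2 ^ n - 1 := by
  induction n with
  | zero => simp
  | succ m ih =>
    rw [Finset.sum_range_succ, ih, pow_succ]
    have h : 1 ≤ 2 ^ m := Nat.one_le_two_pow
    omega

private lemma geom_three (n : ℕ) : 3 * ∑ i ∈ Finset.range n, 4 ^ i = 4 ^ n - 1 := by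
  induction n with
  | zero => simp
  | succ m ih =>
    rw [Finset.sum_range_succ, Nat.mul_add, ih, pow_succ]
    have h : 1 ≤ 4 ^ m := Nat.one_le_pow _ _ (by norm_num)
    omega

section Generic

variable {α : Type*} [AddGroup α] [Fintype α] [DecidableEq α] [DecidableEq (AddSubgroup α)]

private lemma count_dvd_cyclic [IsAddCyclic α] {d : ℕ} (hd : d ∣ Fintype.card α) :
    (Finset.univ.filter fun x : α => addOrderOf x ∣ d).card = d := by
  have hd0 : d ≠ 0 := by
    rintro rfl
    exact Fintype.card_ne_zero (Nat.eq_zero_of_zero_dvd hd)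
  rw [Finset.card_eq_sum_card_fiberwise
    (f := fun x : α => addOrderOf x) (t := d.divisors)
    (fun x hx => Nat.mem_divisors.2 ⟨(Finset.mem_filter.1 hx).2, hd0⟩)]
  have : ∀ e ∈ d.divisors,
      ((Finset.univ.filter fun x : α => addOrderOf x ∣ d).filter
        fun x => addOrderOf x = e).card = Nat.totient e := by
    intro e he
    rw [Finset.filter_filter]
    have heq : (Finset.univ.filter fun x : α => addOrderOf x ∣ d ∧ addOrderOf x = e)
        = Finset.univ.filter fun x : α => addOrderOf x = e := by
      apply Finset.filter_congr
      intro x _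
      constructor
      · exact fun h => h.2
      · exact fun h => ⟨h ▸ (Nat.mem_divisors.1 he).1, h⟩
    rw [heq]
    exact IsAddCyclic.card_addOrderOf_eq_totient ((Nat.mem_divisors.1 he).1.trans hd)
  rw [Finset.sum_congr rfl this, Nat.sum_totient]


private lemma isAddCyclic_zmultiples (y : α) : IsAddCyclic (AddSubgroup.zmultiples y) := by
  refine ⟨⟨⟨y, AddSubgroup.mem_zmultiples y⟩, fun z => ?_⟩⟩
  obtain ⟨k, hk⟩ := AddSubgroup.mem_zmultiples_iff.1 z.2
  exact AddSubgroup.mem_zmultiples_iff.2 ⟨k, Subtype.ext (by simpa using hk)⟩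

private lemma fiber_card {H : AddSubgroup α} (y : α) (hy : H = AddSubgroup.zmultiples y)
    {n : ℕ} (hn : Nat.card H = n) :
    (Finset.univ.filter fun x : α => AddSubgroup.zmultiples x = H).card = Nat.totient n := by
  haveI : IsAddCyclic H := hy ▸ _root_.isAddCyclic_zmultiples y
  haveI : Fintype H := Fintype.ofFinite H
  classical
  have hcardH : Fintype.card H = n := by
    rw [← Nat.card_eq_fintype_card, hn]
  rw [← hcardH]
  rw [← IsAddCyclic.card_addOrderOf_eq_totient (α := H) (dvd_refl _)]
  apply Finset.card_bij (fun x hx => (⟨x, by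
    have h := (Finset.mem_filter.1 hx).2
    exact h ▸ AddSubgroup.mem_zmultiples x⟩ : H))
  · intro x hx
    have h := (Finset.mem_filter.1 hx).2
    simp only [Finset.mem_filter, Finset.mem_univ, true_and]
    rw [AddSubgroup.addOrderOf_mk, ← Nat.card_zmultiples x, h, hn, hcardH]
  · intro x hx x' hx' hxx
    exact congrArg Subtype.val hxx
  · intro z hz
    have hz' := (Finset.mem_filter.1 hz).2
    refine ⟨(z : α), Finset.mem_filter.2 ⟨Finset.mem_univ _, ?_⟩, rfl⟩
    apply AddSubgroup.eq_of_le_of_card_ge (AddSubgroup.zmultiples_le.2 z.2)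
    rw [Nat.card_zmultiples, AddSubgroup.addOrderOf_coe, hz', hn, hcardH]

private lemma image_filter_card_mul_totient (n : ℕ) :
    ((Finset.univ.image fun x : α => AddSubgroup.zmultiples x).filter
        fun H : AddSubgroup α => Nat.card H = n).card * Nat.totient n
      = (Finset.univ.filter fun x : α => addOrderOf x = n).card := by
  have h1 : ∀ x ∈ Finset.univ.filter fun x : α => addOrderOf x = n,
      AddSubgroup.zmultiples x ∈
        (Finset.univ.image fun x : α => AddSubgroup.zmultiples x).filter
          fun H : AddSubgroup α => Nat.card H = n := fun x hx => Finset.mem_filter.2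
        ⟨Finset.mem_image_of_mem _ (Finset.mem_univ x),
         by rw [Nat.card_zmultiples]; exact (Finset.mem_filter.1 hx).2⟩
  rw [Finset.card_eq_sum_card_fiberwise h1]
  have key : ∀ H ∈ (Finset.univ.image fun x : α => AddSubgroup.zmultiples x).filter
        fun H : AddSubgroup α => Nat.card H = n,
      ((Finset.univ.filter fun x : α => addOrderOf x = n).filter
        fun x => AddSubgroup.zmultiples x = H).card = Nat.totient n := by
    intro H hH
    obtain ⟨y, -, hy⟩ := Finset.mem_image.1 (Finset.mem_filter.1 hH).1
    have hn : Nat.card H = n := (Finset.mem_filter.1 hH).2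
    have heq : (Finset.univ.filter
          fun x : α => addOrderOf x = n ∧ AddSubgroup.zmultiples x = H)
        = Finset.univ.filter fun x : α => AddSubgroup.zmultiples x = H := by
      apply Finset.filter_congr
      intro x _
      constructor
      · exact fun h => h.2
      · intro h
        exact ⟨by rw [← Nat.card_zmultiples x, h, hn], h⟩
    rw [Finset.filter_filter, heq, fiber_card y hy.symm hn]
  rw [Finset.sum_congr rfl key, Finset.sum_const, smul_eq_mul]

end Generic

private lemma zmod_count (n k : ℕ) [NeZero (2 ^ n)] :
    (Finset.univ.filter fun x : ZMod (2 ^ n) => addOrderOf x ∣ 2 ^ k).card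
      = 2 ^ min k n := by
  classical
  rcases le_total k n with h | h
  · rw [min_eq_left h]
    exact count_dvd_cyclic (by rw [ZMod.card]; exact pow_dvd_pow 2 h)
  · rw [min_eq_right h]
    have : ∀ x : ZMod (2 ^ n), addOrderOf x ∣ 2 ^ k := fun x =>
      (addOrderOf_dvd_card.trans (by rw [ZMod.card])).trans (pow_dvd_pow 2 h)
    rw [Finset.filter_true_of_mem fun x _ => this x, Finset.card_univ, ZMod.card]

private lemma prod_count {β γ : Type*} [AddGroup β] [AddGroup γ] [Fintype β] [Fintype γ]
    [DecidableEq β] [DecidableEq γ] (m : ℕ) :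
    (Finset.univ.filter fun p : β × γ => addOrderOf p ∣ m).card
      = (Finset.univ.filter fun x : β => addOrderOf x ∣ m).card *
        (Finset.univ.filter fun y : γ => addOrderOf y ∣ m).card := by
  have key : ∀ p : β × γ, addOrderOf p ∣ m ↔ addOrderOf p.1 ∣ m ∧ addOrderOf p.2 ∣ m := by
    intro p
    rw [Prod.addOrderOf p, Nat.lcm_dvd_iff]
  rw [show (Finset.univ.filter fun p : β × γ => addOrderOf p ∣ m)
      = Finset.univ.filter fun p : β × γ => addOrderOf p.1 ∣ m ∧ addOrderOf p.2 ∣ m from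
    Finset.filter_congr fun p _ => key p]
  rw [← Finset.univ_product_univ, Finset.filter_product (fun x : β => addOrderOf x ∣ m) (fun y : γ => addOrderOf y ∣ m), Finset.card_product]

private def Vf (a b c k : ℕ) : ℕ :=
  if k = 0 then 1
  else if k ≤ c then 7 * 4 ^ (k - 1)
  else if k ≤ b then 3 * 2 ^ (k - 1 + c)
  else if k ≤ a then 2 ^ (b + c)
  else 0

private lemma V_totient (a b c : ℕ) (hcb : c ≤ b) (hba : b ≤ a) (k : ℕ) :
    Vf a b c (k + 1) * Nat.totient (2 ^ (k + 1))
        + 2 ^ (min k a + min k b + min k c)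
      = 2 ^ (min (k + 1) a + min (k + 1) b + min (k + 1) c) := by
  have htot : Nat.totient (2 ^ (k + 1)) = 2 ^ k := by
    rw [Nat.totient_prime_pow Nat.prime_two (Nat.succ_pos k)]
    simp
  rw [htot]
  unfold Vf
  rw [if_neg (Nat.succ_ne_zero k)]
  by_cases h1 : k + 1 ≤ c
  · rw [if_pos h1,
      min_eq_left (by omega), min_eq_left (by omega), min_eq_left (by omega),
      min_eq_left (by omega), min_eq_left (by omega), min_eq_left (by omega)]
    have e1 : k + 1 - 1 = k := rfl
    have e2 : (4 : ℕ) ^ k = 2 ^ k * 2 ^ k := by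
      rw [show (4 : ℕ) = 2 * 2 by norm_num, mul_pow]
    have e3 : (2 : ℕ) ^ (k + k + k) = 2 ^ k * 2 ^ k * 2 ^ k := by
      rw [pow_add, pow_add]
    have e4 : (2 : ℕ) ^ (k + 1 + (k + 1) + (k + 1)) = 2 ^ k * 2 ^ k * 2 ^ k * 8 := by
      rw [show k + 1 + (k + 1) + (k + 1) = k + k + k + 3 by omega, pow_add, e3]
      norm_num
    rw [e1, e2, e3, e4]; ring
  · by_cases h2 : k + 1 ≤ b
    · rw [if_neg h1, if_pos h2,
        min_eq_left (by omega), min_eq_left (by omega), min_eq_right (by omega),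
        min_eq_left (by omega), min_eq_left (by omega), min_eq_right (by omega)]
      have e1 : k + 1 - 1 + c = k + c := rfl
      have e2 : (2 : ℕ) ^ (k + c) = 2 ^ k * 2 ^ c := pow_add 2 k c
      have e3 : (2 : ℕ) ^ (k + k + c) = 2 ^ k * 2 ^ k * 2 ^ c := by
        rw [pow_add, pow_add]
      have e4 : (2 : ℕ) ^ (k + 1 + (k + 1) + c) = 2 ^ k * 2 ^ k * 2 ^ c * 4 := by
        rw [show k + 1 + (k + 1) + c = k + k + c + 2 by omega, pow_add, e3]
        norm_num
      rw [e1, e2, e3, e4]; ring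
    · by_cases h3 : k + 1 ≤ a
      · rw [if_neg h1, if_neg h2, if_pos h3,
          min_eq_left (by omega), min_eq_right (by omega), min_eq_right (by omega),
          min_eq_left (by omega), min_eq_right (by omega), min_eq_right (by omega)]
        have e2 : (2 : ℕ) ^ (b + c) = 2 ^ b * 2 ^ c := pow_add 2 b c
        have e3 : (2 : ℕ) ^ (k + b + c) = 2 ^ k * 2 ^ b * 2 ^ c := by
          rw [pow_add, pow_add]
        have e4 : (2 : ℕ) ^ (k + 1 + b + c) = 2 ^ k * 2 ^ b * 2 ^ c * 2 := by
          rw [show k + 1 + b + c = k + b + c + 1 by omega, pow_add, e3]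
          norm_num
        rw [e2, e3, e4]; ring
      · rw [if_neg h1, if_neg h2, if_neg h3,
          min_eq_right (by omega), min_eq_right (by omega), min_eq_right (by omega),
          min_eq_right (by omega), min_eq_right (by omega), min_eq_right (by omega)]
        simp

private lemma mul_sub_pow (u v : ℕ) : u * (v - 1) = u * v - u := by
  cases v with
  | zero => simp
  | succ w => rw [Nat.succ_sub_one, Nat.mul_succ]; omega

private lemma sum_V (a b c : ℕ) (hc : 1 ≤ c) (hcb : c ≤ b) (hba : b ≤ a) :
    ∑ k ∈ Finset.range (a + b + c + 1), Vf a b c k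
      = 7 * (4 ^ c - 1) / 3 + 3 * 2 ^ c * (2 ^ b - 2 ^ c) + (a - b) * 2 ^ (b + c) + 1 := by
  have hshrink : ∑ k ∈ Finset.range (a + b + c + 1), Vf a b c k
      = ∑ k ∈ Finset.range (a + 1), Vf a b c k := by
    refine (Finset.sum_subset (Finset.range_subset_range.2 (by omega)) ?_).symm
    intro x _ hx
    rw [Finset.mem_range, not_lt] at hx
    unfold Vf
    rw [if_neg (by omega), if_neg (by omega), if_neg (by omega), if_neg (by omega)]
  rw [hshrink, Finset.range_eq_Ico,
    ← Finset.sum_Ico_consecutive _ (by omega : 0 ≤ b + 1) (by omega : b + 1 ≤ a + 1),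
    ← Finset.sum_Ico_consecutive _ (by omega : 0 ≤ c + 1) (by omega : c + 1 ≤ b + 1),
    ← Finset.sum_Ico_consecutive _ (by omega : 0 ≤ 1) (by omega : 1 ≤ c + 1)]
  have p1 : ∑ k ∈ Finset.Ico 0 1, Vf a b c k = 1 := by
    simp [Vf]
  have p2 : ∑ k ∈ Finset.Ico 1 (c + 1), Vf a b c k = 7 * (4 ^ c - 1) / 3 := by
    rw [Finset.sum_Ico_eq_sum_range]
    simp only [Nat.add_sub_cancel]
    have : ∀ i ∈ Finset.range c, Vf a b c (1 + i) = 7 * 4 ^ i := by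
      intro i hi
      rw [Finset.mem_range] at hi
      unfold Vf
      rw [if_neg (by omega), if_pos (by omega), show 1 + i - 1 = i by omega]
    rw [Finset.sum_congr rfl this, ← Finset.mul_sum, ← geom_three c,
      show 7 * (3 * ∑ i ∈ Finset.range c, 4 ^ i) = 3 * (7 * ∑ i ∈ Finset.range c, 4 ^ i) by ring,
      Nat.mul_div_cancel_left _ (by norm_num : 0 < 3)]
  have p3 : ∑ k ∈ Finset.Ico (c + 1) (b + 1), Vf a b c k = 3 * 2 ^ c * (2 ^ b - 2 ^ c) := by
    rw [Finset.sum_Ico_eq_sum_range]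
    have hcard : b + 1 - (c + 1) = b - c := by omega
    rw [hcard]
    have : ∀ i ∈ Finset.range (b - c), Vf a b c (c + 1 + i) = 3 * 2 ^ (2 * c) * 2 ^ i := by
      intro i hi
      rw [Finset.mem_range] at hi
      unfold Vf
      rw [if_neg (by omega), if_neg (by omega), if_pos (by omega)]
      rw [show c + 1 + i - 1 + c = 2 * c + i by omega, pow_add]
      ring
    rw [Finset.sum_congr rfl this, ← Finset.mul_sum, sum_two_pow, mul_sub_pow]
    have h1 : 3 * 2 ^ (2 * c) * 2 ^ (b - c) = 3 * 2 ^ c * 2 ^ b := by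
      rw [mul_assoc, mul_assoc, ← pow_add, ← pow_add]
      congr 2
      omega
    have h2 : 3 * 2 ^ (2 * c) = 3 * 2 ^ c * 2 ^ c := by
      rw [mul_assoc, ← pow_add]
      congr 2
      omega
    rw [h1, h2, Nat.mul_sub]
  have p4 : ∑ k ∈ Finset.Ico (b + 1) (a + 1), Vf a b c k = (a - b) * 2 ^ (b + c) := by
    have : ∀ k ∈ Finset.Ico (b + 1) (a + 1), Vf a b c k = 2 ^ (b + c) := by
      intro k hk
      rw [Finset.mem_Ico] at hk
      unfold Vf
      rw [if_neg (by omega), if_neg (by omega), if_neg (by omega), if_pos (by omega)]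
    rw [Finset.sum_congr rfl this, Finset.sum_const, Nat.card_Ico, smul_eq_mul]
    congr 1
    omega
  rw [p1, p2, p3, p4]
  generalize 7 * (4 ^ c - 1) / 3 = X
  generalize 3 * 2 ^ c * (2 ^ b - 2 ^ c) = Y
  generalize (a - b) * 2 ^ (b + c) = Z
  ring

theorem total_cyclic_subgroups_three_factors (a b c : ℕ) (hc : 1 ≤ c) (hcb : c ≤ b)
    (hba : b ≤ a) :
    Set.ncard {H : AddSubgroup (ZMod (2 ^ a) × ZMod (2 ^ b) × ZMod (2 ^ c)) |
      ∃ x, H = AddSubgroup.zmultiples x} =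
      7 * (4 ^ c - 1) / 3 + 3 * 2 ^ c * (2 ^ b - 2 ^ c) + (a - b) * 2 ^ (b + c) + 1 := by
  classical
  haveI : NeZero (2 ^ a) := ⟨pow_ne_zero _ two_ne_zero⟩
  haveI : NeZero (2 ^ b) := ⟨pow_ne_zero _ two_ne_zero⟩
  haveI : NeZero (2 ^ c) := ⟨pow_ne_zero _ two_ne_zero⟩
  have hset : {H : AddSubgroup (ZMod (2 ^ a) × ZMod (2 ^ b) × ZMod (2 ^ c)) | ∃ x, H = AddSubgroup.zmultiples x}
      = ↑(Finset.univ.image fun x : (ZMod (2 ^ a) × ZMod (2 ^ b) × ZMod (2 ^ c)) => AddSubgroup.zmultiples x) := by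
    ext H
    simp [eq_comm]
  rw [hset, Set.ncard_coe_finset]
  have hcardG : Fintype.card (ZMod (2 ^ a) × ZMod (2 ^ b) × ZMod (2 ^ c)) = 2 ^ (a + b + c) := by
    rw [Fintype.card_prod, Fintype.card_prod, ZMod.card, ZMod.card, ZMod.card,
      pow_add, pow_add, mul_assoc]
  have hN : ∀ k, (Finset.univ.filter fun x : (ZMod (2 ^ a) × ZMod (2 ^ b) × ZMod (2 ^ c)) => addOrderOf x ∣ 2 ^ k).card
      = 2 ^ (min k a + min k b + min k c) := by
    intro k
    rw [prod_count, prod_count, zmod_count, zmod_count, zmod_count,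
      pow_add, pow_add, mul_assoc]
  have hsplit : ∀ k, (Finset.univ.filter fun x : (ZMod (2 ^ a) × ZMod (2 ^ b) × ZMod (2 ^ c)) => addOrderOf x = 2 ^ (k + 1)).card
      + (Finset.univ.filter fun x : (ZMod (2 ^ a) × ZMod (2 ^ b) × ZMod (2 ^ c)) => addOrderOf x ∣ 2 ^ k).card
      = (Finset.univ.filter fun x : (ZMod (2 ^ a) × ZMod (2 ^ b) × ZMod (2 ^ c)) => addOrderOf x ∣ 2 ^ (k + 1)).card := by
    intro k
    have hiff : ∀ x : (ZMod (2 ^ a) × ZMod (2 ^ b) × ZMod (2 ^ c)), addOrderOf x ∣ 2 ^ (k + 1)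
        ↔ (addOrderOf x = 2 ^ (k + 1) ∨ addOrderOf x ∣ 2 ^ k) := by
      intro x
      constructor
      · intro h
        obtain ⟨j, hj, hx⟩ := (Nat.dvd_prime_pow Nat.prime_two).1 h
        rcases Nat.lt_or_ge j (k + 1) with hj' | hj'
        · exact Or.inr (hx ▸ pow_dvd_pow 2 (by omega))
        · exact Or.inl (by rw [hx]; congr 1; omega)
      · rintro (h | h)
        · exact h ▸ dvd_rfl
        · exact h.trans (pow_dvd_pow 2 (Nat.le_succ k))
    have hdis : Disjoint (Finset.univ.filter fun x : (ZMod (2 ^ a) × ZMod (2 ^ b) × ZMod (2 ^ c)) => addOrderOf x = 2 ^ (k + 1))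
        (Finset.univ.filter fun x : (ZMod (2 ^ a) × ZMod (2 ^ b) × ZMod (2 ^ c)) => addOrderOf x ∣ 2 ^ k) := by
      rw [Finset.disjoint_left]
      intro x hx hx'
      rw [Finset.mem_filter] at hx hx'
      have hd : (2 : ℕ) ^ (k + 1) ∣ 2 ^ k := hx.2 ▸ hx'.2
      have h1 := Nat.le_of_dvd (by positivity) hd
      have h2 : (2 : ℕ) ^ k < 2 ^ (k + 1) := Nat.pow_lt_pow_right one_lt_two (Nat.lt_succ_self k)
      omega
    rw [show (Finset.univ.filter fun x : (ZMod (2 ^ a) × ZMod (2 ^ b) × ZMod (2 ^ c)) => addOrderOf x ∣ 2 ^ (k + 1))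
        = (Finset.univ.filter fun x : (ZMod (2 ^ a) × ZMod (2 ^ b) × ZMod (2 ^ c)) => addOrderOf x = 2 ^ (k + 1))
          ∪ (Finset.univ.filter fun x : (ZMod (2 ^ a) × ZMod (2 ^ b) × ZMod (2 ^ c)) => addOrderOf x ∣ 2 ^ k) by
      rw [← Finset.filter_or]
      exact Finset.filter_congr fun x _ => hiff x]
    rw [Finset.card_union_of_disjoint hdis]
  have hTkV : ∀ k, ((Finset.univ.image fun x : (ZMod (2 ^ a) × ZMod (2 ^ b) × ZMod (2 ^ c)) => AddSubgroup.zmultiples x).filter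
      fun H : AddSubgroup (ZMod (2 ^ a) × ZMod (2 ^ b) × ZMod (2 ^ c)) => Nat.card H = 2 ^ k).card = Vf a b c k := by
    intro k
    cases k with
    | zero =>
      have h := image_filter_card_mul_totient (α := (ZMod (2 ^ a) × ZMod (2 ^ b) × ZMod (2 ^ c))) (2 ^ 0)
      rw [pow_zero, Nat.totient_one, mul_one] at h
      have hM0 : (Finset.univ.filter fun x : (ZMod (2 ^ a) × ZMod (2 ^ b) × ZMod (2 ^ c)) => addOrderOf x = 1).card = 1 := by
        rw [show (Finset.univ.filter fun x : (ZMod (2 ^ a) × ZMod (2 ^ b) × ZMod (2 ^ c)) => addOrderOf x = 1)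
            = Finset.univ.filter fun x : (ZMod (2 ^ a) × ZMod (2 ^ b) × ZMod (2 ^ c)) => x = 0 from
          Finset.filter_congr fun x _ => AddMonoid.addOrderOf_eq_one_iff]
        rw [Finset.filter_eq']
        simp
      rw [pow_zero]
      rw [h, hM0]
      rfl
    | succ k =>
      have h := image_filter_card_mul_totient (α := (ZMod (2 ^ a) × ZMod (2 ^ b) × ZMod (2 ^ c))) (2 ^ (k + 1))
      have h2 := V_totient a b c hcb hba k
      have h3 := hsplit k
      rw [hN k, hN (k + 1)] at h3
      have h4 : (Finset.univ.filter fun x : (ZMod (2 ^ a) × ZMod (2 ^ b) × ZMod (2 ^ c)) => addOrderOf x = 2 ^ (k + 1)).card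
          = Vf a b c (k + 1) * Nat.totient (2 ^ (k + 1)) := by omega
      refine Nat.eq_of_mul_eq_mul_right (m := Nat.totient (2 ^ (k + 1)))
        (Nat.totient_pos.mpr (by positivity)) ?_
      rw [h, h4]
  have hdecomp : (Finset.univ.image fun x : (ZMod (2 ^ a) × ZMod (2 ^ b) × ZMod (2 ^ c)) => AddSubgroup.zmultiples x).card
      = ∑ k ∈ Finset.range (a + b + c + 1),
        ((Finset.univ.image fun x : (ZMod (2 ^ a) × ZMod (2 ^ b) × ZMod (2 ^ c)) => AddSubgroup.zmultiples x).filter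
          fun H : AddSubgroup (ZMod (2 ^ a) × ZMod (2 ^ b) × ZMod (2 ^ c)) => Nat.card H = 2 ^ k).card := by
    have hcard2 : ∀ H ∈ Finset.univ.image fun x : (ZMod (2 ^ a) × ZMod (2 ^ b) × ZMod (2 ^ c)) => AddSubgroup.zmultiples x,
        ∃ j ≤ a + b + c, Nat.card H = 2 ^ j := by
      intro H hH
      obtain ⟨x, -, hx⟩ := Finset.mem_image.1 hH
      have hdvd : Nat.card H ∣ 2 ^ (a + b + c) := by
        rw [← hx, Nat.card_zmultiples, ← hcardG]
        exact addOrderOf_dvd_card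
      obtain ⟨j, hj, hc⟩ := (Nat.dvd_prime_pow Nat.prime_two).1 hdvd
      exact ⟨j, hj, hc⟩
    rw [Finset.card_eq_sum_card_fiberwise
      (f := fun H : AddSubgroup (ZMod (2 ^ a) × ZMod (2 ^ b) × ZMod (2 ^ c)) => Nat.log 2 (Nat.card H))
      (t := Finset.range (a + b + c + 1))
      (fun H hH => by
        obtain ⟨j, hj, hcard⟩ := hcard2 H hH
        show Nat.log 2 (Nat.card H) ∈ Finset.range (a + b + c + 1)
        rw [hcard, Nat.log_pow one_lt_two, Finset.mem_range]
        omega)]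
    apply Finset.sum_congr rfl
    intro k hk
    apply congrArg Finset.card
    apply Finset.filter_congr
    intro H hH
    obtain ⟨j, hj, hcard⟩ := hcard2 H hH
    rw [hcard, Nat.log_pow one_lt_two]
    constructor
    · rintro rfl; rfl
    · exact fun h => Nat.pow_right_injective (le_refl 2) h
  rw [hdecomp, Finset.sum_congr rfl fun k _ => hTkV k, sum_V a b c hc hcb hba]
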